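/- If P(x,y) is a polynomial with real coefficients such that the resultant with respect to y of P(x,y) and y² + x² − 1 vanishes identically in x, then P(cos θ, sin θ) = 0 for all real θ. -/

import Mathlib

open Polynomial

/-- The `(s+r) × (s+r)` Sylvester matrix of `P` (viewed with degree `r`) and `Q` (viewed with
degree `s`): the first `s` rows contain the shifted coefficients `p_r, …, p_0` of `P`, the
remaining `r` rows the shifted coefficients `q_s, …, q_0` of `Q`. -/
def sylvester {R : Type*} [CommRing R] (P Q : Polynomial R) (r s : ℕ) :
    Matrix (Fin (s + r)) (Fin (s + r)) R :=
  Matrix.of fun i j =>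
    if (i : ℕ) < s then
      (if (i : ℕ) ≤ (j : ℕ) ∧ (j : ℕ) ≤ (i : ℕ) + r then P.coeff (r - ((j : ℕ) - (i : ℕ)))
       else 0)
    else
      (if (i : ℕ) - s ≤ (j : ℕ) ∧ (j : ℕ) ≤ (i : ℕ) - s + s then
        Q.coeff (s - ((j : ℕ) - ((i : ℕ) - s)))
       else 0)

/-- The resultant of `P` and `Q` (with respect to the outer variable), as the determinant of
the Sylvester matrix. -/
def resultant {R : Type*} [CommRing R] (P Q : Polynomial R) (r s : ℕ) : R :=
  (_root_.sylvester P Q r s).det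

/-- Evaluation of `P(x,y) ∈ (ℝ[x])[y]` at `x = x₀ ∈ ℝ`, `y ∈ ℂ`. -/
noncomputable def evalXY (P : Polynomial (Polynomial ℝ)) (x₀ : ℝ) (y : ℂ) : ℂ :=
  ((P.map (Polynomial.evalRingHom x₀)).map (algebraMap ℝ ℂ)).eval y

lemma sylvester_map {R S : Type*} [CommRing R] [CommRing S] (φ : R →+* S)
    (P Q : Polynomial R) (r s : ℕ) :
    (_root_.sylvester P Q r s).map φ = _root_.sylvester (P.map φ) (Q.map φ) r s := by
  ext i j
  simp only [_root_.sylvester, Matrix.map_apply, Matrix.of_apply, coeff_map]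
  split_ifs <;> simp [coeff_map]

lemma key {K : Type*} [Field K] (P Q : K[X]) (r s : ℕ) (hs : 0 < s)
    (hP : P.natDegree ≤ r) (hQ : Q.natDegree ≤ s)
    (h : (_root_.sylvester P Q r s).det = 0) :
    ∃ A B : K[X], A.natDegree ≤ s - 1 ∧ ¬(A = 0 ∧ B = 0) ∧ A * P + B * Q = 0 := by
  obtain ⟨v, hv, hvM⟩ := Matrix.exists_vecMul_eq_zero_iff.mpr h
  set A : K[X] := ∑ i : Fin s, C (v (Fin.castAdd r i)) * X ^ (s - 1 - (i : ℕ)) with hAdef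
  set B : K[X] := ∑ i : Fin r, C (v (Fin.natAdd s i)) * X ^ (r - 1 - (i : ℕ)) with hBdef
  have hA : ∀ k, (A * P).coeff k = ∑ i : Fin s, v (Fin.castAdd r i) *
      (if s - 1 - (i : ℕ) ≤ k then P.coeff (k - (s - 1 - (i : ℕ))) else 0) := by
    intro k
    rw [hAdef, Finset.sum_mul, finset_sum_coeff]
    refine Finset.sum_congr rfl fun i _ => ?_
    rw [mul_right_comm, coeff_mul_X_pow']
    split_ifs with hc
    · rw [coeff_C_mul]
    · rw [mul_zero]
  have hB : ∀ k, (B * Q).coeff k = ∑ i : Fin r, v (Fin.natAdd s i) *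
      (if r - 1 - (i : ℕ) ≤ k then Q.coeff (k - (r - 1 - (i : ℕ))) else 0) := by
    intro k
    rw [hBdef, Finset.sum_mul, finset_sum_coeff]
    refine Finset.sum_congr rfl fun i _ => ?_
    rw [mul_right_comm, coeff_mul_X_pow']
    split_ifs with hc
    · rw [coeff_C_mul]
    · rw [mul_zero]
  refine ⟨A, B, ?_, ?_, ?_⟩
  · refine natDegree_sum_le_of_forall_le _ _ fun i _ => ?_
    exact (natDegree_C_mul_X_pow_le _ _).trans (by omega)
  · rintro ⟨hA0, hB0⟩
    apply hv
    funext idx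
    by_cases hlt : (idx : ℕ) < s
    · have hidx : idx = Fin.castAdd r ⟨(idx : ℕ), hlt⟩ := by ext; simp
      have : A.coeff (s - 1 - (idx : ℕ)) = v idx := by
        rw [hAdef, finset_sum_coeff, hidx]
        rw [Finset.sum_eq_single (⟨(idx : ℕ), hlt⟩ : Fin s)]
        · simp [coeff_C_mul, coeff_X_pow]
        · intro i _ hne
          rw [coeff_C_mul, coeff_X_pow, if_neg, mul_zero]
          intro hEq
          exact hne (by ext; have := i.isLt; simp at hEq ⊢; omega)
        · simp
      rw [← this, hA0, coeff_zero, Pi.zero_apply]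
    · have hidx : idx = Fin.natAdd s ⟨(idx : ℕ) - s, by have := idx.isLt; omega⟩ := by
        ext; simp; omega
      have : B.coeff (r - 1 - ((idx : ℕ) - s)) = v idx := by
        rw [hBdef, finset_sum_coeff, hidx]
        rw [Finset.sum_eq_single (⟨(idx : ℕ) - s, by have := idx.isLt; omega⟩ : Fin r)]
        · simp [coeff_C_mul, coeff_X_pow]
        · intro i _ hne
          rw [coeff_C_mul, coeff_X_pow, if_neg, mul_zero]
          intro hEq
          exact hne (by ext; have := i.isLt; have hi := idx.isLt; simp at hEq ⊢; omega)
        · simp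
      rw [← this, hB0, coeff_zero, Pi.zero_apply]
  · have hM1 : ∀ (i : Fin s) (j : Fin (s + r)), _root_.sylvester P Q r s (Fin.castAdd r i) j =
        (if (i : ℕ) ≤ (j : ℕ) ∧ (j : ℕ) ≤ (i : ℕ) + r then P.coeff (r - ((j : ℕ) - (i : ℕ)))
         else 0) := by
      intro i j
      simp only [_root_.sylvester, Matrix.of_apply, Fin.coe_castAdd]
      rw [if_pos i.isLt]
    have hM2 : ∀ (i : Fin r) (j : Fin (s + r)), _root_.sylvester P Q r s (Fin.natAdd s i) j =
        (if (i : ℕ) ≤ (j : ℕ) ∧ (j : ℕ) ≤ (i : ℕ) + s then Q.coeff (s - ((j : ℕ) - (i : ℕ)))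
         else 0) := by
      intro i j
      have h1 : s + (i : ℕ) - s = (i : ℕ) := by omega
      simp only [_root_.sylvester, Matrix.of_apply, Fin.coe_natAdd]
      rw [if_neg (by omega), h1]
    ext k
    rw [coeff_add, hA k, hB k, coeff_zero]
    by_cases hk : k < s + r
    · have hj : s + r - 1 - k < s + r := by omega
      have h0 := congrFun hvM ⟨s + r - 1 - k, hj⟩
      rw [Matrix.vecMul, Pi.zero_apply, dotProduct, Fin.sum_univ_add] at h0
      simp only [hM1, hM2] at h0
      refine Eq.trans ?_ h0
      congr 1
      · refine Finset.sum_congr rfl fun i _ => ?_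
        have hi := i.isLt
        by_cases hc : (i : ℕ) ≤ ((⟨s + r - 1 - k, hj⟩ : Fin (s + r)) : ℕ) ∧
            ((⟨s + r - 1 - k, hj⟩ : Fin (s + r)) : ℕ) ≤ (i : ℕ) + r
        · rw [if_pos hc, if_pos (by simp only [] at hc ⊢; omega)]
          have harg : k - (s - 1 - (i : ℕ)) =
              r - (((⟨s + r - 1 - k, hj⟩ : Fin (s + r)) : ℕ) - (i : ℕ)) := by
            simp only [] at hc ⊢; omega
          rw [harg]
        · rw [if_neg hc]
          by_cases hc2 : s - 1 - (i : ℕ) ≤ k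
          · rw [if_pos hc2, coeff_eq_zero_of_natDegree_lt (by simp only [] at hc ⊢; omega),
              mul_zero]
          · rw [if_neg hc2]
      · refine Finset.sum_congr rfl fun i _ => ?_
        have hi := i.isLt
        by_cases hc : (i : ℕ) ≤ ((⟨s + r - 1 - k, hj⟩ : Fin (s + r)) : ℕ) ∧
            ((⟨s + r - 1 - k, hj⟩ : Fin (s + r)) : ℕ) ≤ (i : ℕ) + s
        · rw [if_pos hc, if_pos (by simp only [] at hc ⊢; omega)]
          have harg : k - (r - 1 - (i : ℕ)) =
              s - (((⟨s + r - 1 - k, hj⟩ : Fin (s + r)) : ℕ) - (i : ℕ)) := by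
            simp only [] at hc ⊢; omega
          rw [harg]
        · rw [if_neg hc]
          by_cases hc2 : r - 1 - (i : ℕ) ≤ k
          · rw [if_pos hc2, coeff_eq_zero_of_natDegree_lt (by simp only [] at hc ⊢; omega),
              mul_zero]
          · rw [if_neg hc2]
    · rw [Finset.sum_eq_zero, Finset.sum_eq_zero, add_zero]
      · intro i _
        have hi := i.isLt
        rw [if_pos (by omega), coeff_eq_zero_of_natDegree_lt (by omega), mul_zero]
      · intro i _
        have hi := i.isLt
        rw [if_pos (by omega), coeff_eq_zero_of_natDegree_lt (by omega), mul_zero]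

lemma no_root_aux (t : RatFunc ℝ) :
    t ^ 2 + algebraMap (Polynomial ℝ) (RatFunc ℝ) (X ^ 2 - 1) ≠ 0 := by
  intro ht
  set φ := algebraMap (Polynomial ℝ) (RatFunc ℝ) with hφ
  have hd : t.denom ≠ 0 := RatFunc.denom_ne_zero t
  have hdφ : φ t.denom ≠ 0 := RatFunc.algebraMap_ne_zero hd
  have hnum : φ t.num = t * φ t.denom := by
    have h' := RatFunc.num_div_denom t
    rw [div_eq_iff hdφ] at h'
    exact h' 
  have heq : t.num ^ 2 = (1 - X ^ 2 : Polynomial ℝ) * t.denom ^ 2 := by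
    apply RatFunc.algebraMap_injective
    rw [map_mul, map_pow, map_pow, hnum, mul_pow]
    have ht2 : t ^ 2 = φ (1 - X ^ 2) := by
      have h' : φ (1 - X ^ 2) = -φ (X ^ 2 - 1) := by rw [← map_neg]; congr 1; ring
      rw [h']
      exact eq_neg_of_add_eq_zero_left ht
    rw [ht2]
  have h1x : (1 - X ^ 2 : Polynomial ℝ) ≠ 0 := fun hh => by
    have := congrArg (fun p => Polynomial.coeff p 0) hh
    simp at this
  have hn0 : t.num ≠ 0 := by
    intro h0
    rw [h0, zero_pow (two_ne_zero)] at heq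
    exact (mul_ne_zero h1x (pow_ne_zero _ hd)) heq.symm
  have hfac : (1 - X ^ 2 : Polynomial ℝ) = C (-1) * ((X - C 1) * (X + C 1)) := by
    simp only [map_one, map_neg]
    ring
  have hrmL : rootMultiplicity (1 : ℝ) (t.num ^ 2) = 2 * rootMultiplicity 1 t.num := by
    rw [pow_two t.num, rootMultiplicity_mul (mul_ne_zero hn0 hn0)]; ring
  have hrmR : rootMultiplicity (1 : ℝ) ((1 - X ^ 2 : Polynomial ℝ) * t.denom ^ 2) =
      1 + 2 * rootMultiplicity 1 t.denom := by
    rw [rootMultiplicity_mul (mul_ne_zero h1x (pow_ne_zero _ hd)),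
      pow_two t.denom, rootMultiplicity_mul (mul_ne_zero hd hd)]
    have h1 : rootMultiplicity (1 : ℝ) (1 - X ^ 2 : Polynomial ℝ) = 1 := by
      rw [hfac, rootMultiplicity_mul (by rw [← hfac]; exact h1x),
        rootMultiplicity_mul (by intro hh; apply h1x; rw [hfac]; simp [mul_eq_zero] at hh ⊢; tauto)]
      rw [rootMultiplicity_eq_zero (by simp [IsRoot]),
        rootMultiplicity_X_sub_C_self,
        rootMultiplicity_eq_zero (by norm_num [IsRoot])]
    rw [h1]; ring
  rw [heq, hrmR] at hrmL
  omega

/-- If the resultant with respect to `y` of `P(x,y)` and `y² + x² − 1` vanishes identically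
in `x`, then `P(cos θ, sin θ) = 0` for all real `θ`. -/
theorem stmt_8 (P : Polynomial (Polynomial ℝ))
    (h : _root_.resultant P (Polynomial.X ^ 2 + Polynomial.C (Polynomial.X ^ 2 - 1))
        P.natDegree 2 = 0) :
    ∀ θ : ℝ, (P.map (Polynomial.evalRingHom (Real.cos θ))).eval (Real.sin θ) = 0 := by
  set Q : Polynomial (Polynomial ℝ) := X ^ 2 + C (X ^ 2 - 1) with hQdef
  have hQmonic : Q.Monic := monic_X_pow_add_C _ two_ne_zero
  set φ := algebraMap (Polynomial ℝ) (RatFunc ℝ) with hφ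
  have hQm : Q.map φ = X ^ 2 + C (φ (X ^ 2 - 1)) := by
    rw [hQdef, Polynomial.map_add, Polynomial.map_pow, map_X, map_C]
  have hQmdeg : (Q.map φ).natDegree = 2 := by rw [hQm]; exact natDegree_X_pow_add_C
  have hQmne : Q.map φ ≠ 0 := (hQmonic.map φ).ne_zero
  have hdvd : Q ∣ P := by
    have hdet : (_root_.sylvester (P.map φ) (Q.map φ) P.natDegree 2).det = 0 := by
      have h2 := congrArg φ h
      rw [map_zero, _root_.resultant, RingHom.map_det, RingHom.mapMatrix_apply, sylvester_map] at h2
      exact h2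
    obtain ⟨A, B, hAdeg, hABne, hABeq⟩ :=
      key (P.map φ) (Q.map φ) P.natDegree 2 (by norm_num) natDegree_map_le hQmdeg.le hdet
    have hirr : Irreducible (Q.map φ) := by
      rw [irreducible_iff_roots_eq_zero_of_degree_le_three (by omega) (by omega)]
      rw [Multiset.eq_zero_iff_forall_notMem]
      intro a ha
      rw [mem_roots hQmne] at ha
      rw [IsRoot.def, hQm] at ha
      simp only [eval_add, eval_pow, eval_X, eval_C] at ha
      exact no_root_aux a ha
    have hAne : A ≠ 0 := by
      intro hA0
      rw [hA0, zero_mul, zero_add, mul_eq_zero] at hABeq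
      exact hABne ⟨hA0, hABeq.resolve_right hQmne⟩
    have hdegA : A.degree < (Q.map φ).degree := by
      rw [hQm, degree_X_pow_add_C (by norm_num)]
      exact lt_of_le_of_lt degree_le_natDegree
        (by exact_mod_cast Nat.lt_of_le_of_lt hAdeg one_lt_two)
    have hQdvdAP : Q.map φ ∣ A * P.map φ :=
      ⟨-B, by linear_combination hABeq⟩
    have hQdvdP : Q.map φ ∣ P.map φ := by
      rcases (hirr.prime.2.2 A (P.map φ) hQdvdAP) with hA | hP
      · exact absurd (eq_zero_of_dvd_of_degree_lt hA hdegA) hAne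
      · exact hP
    have hmod : (P %ₘ Q).map φ = 0 := by
      rw [Polynomial.map_modByMonic _ hQmonic]
      exact (modByMonic_eq_zero_iff_dvd (hQmonic.map φ)).mpr hQdvdP
    have hP0 : P %ₘ Q = 0 :=
      (Polynomial.map_eq_zero_iff (RatFunc.algebraMap_injective ℝ)).mp hmod
    exact (modByMonic_eq_zero_iff_dvd hQmonic).mp hP0
  intro θ
  obtain ⟨S, hS⟩ := hdvd
  rw [hS, Polynomial.map_mul, eval_mul]
  have hQeval : ((Q.map (Polynomial.evalRingHom (Real.cos θ))).eval (Real.sin θ)) = 0 := by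
    rw [hQdef, Polynomial.map_add, Polynomial.map_pow, map_X, map_C]
    simp only [eval_add, eval_pow, eval_X, eval_C, coe_evalRingHom, eval_sub, eval_one]
    nlinarith [Real.sin_sq_add_cos_sq θ]
  rw [hQeval, zero_mul]
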